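/- Let H be a real Hilbert space and ω : H × H → ℝ a bounded bilinear form that is skew-symmetric (ω(x, y) = −ω(y, x)) and nondegenerate in the sense that the bounded operator A : H → H determined by ⟨A x, y⟩ = ω(x, y) is bijective. Then there exist a bounded, selfadjoint, positive, invertible operator T : H → H and a bounded operator J : H → H such that J ∘ J = −Id, ω(x, y) = ⟨T(J x), y⟩ for all x, y, and ⟨T(J x), J y⟩ = ⟨T x, y⟩ for all x, y. In other words, ⟨x, y⟩' := ⟨T x, y⟩ is an inner product on H inducing a norm equivalent to the original one, with respect to which J is an isometric almost complex structure and ω(x, y) = ⟨J x, y⟩'. -/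

import Mathlib

open Finset

noncomputable def sqCoef : ℕ → ℝ
  | 0 => 1
  | n + 1 => -((catalan n : ℝ) / (2 * 4 ^ n))

@[simp] lemma sqCoef_zero : sqCoef 0 = 1 := rfl
lemma sqCoef_succ (n : ℕ) : sqCoef (n + 1) = -((catalan n : ℝ) / (2 * 4 ^ n)) := rfl

lemma sqCoef_abs_succ (n : ℕ) : |sqCoef (n + 1)| = (catalan n : ℝ) / (2 * 4 ^ n) := by
  rw [sqCoef_succ, abs_neg, abs_of_nonneg]
  positivity

lemma sqCoef_conv (n : ℕ) :
    ∑ ij ∈ antidiagonal n, sqCoef ij.1 * sqCoef ij.2 =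
      if n = 0 then 1 else if n = 1 then -1 else 0 := by
  match n with
  | 0 => simp
  | 1 =>
    rw [Nat.sum_antidiagonal_eq_sum_range_succ (fun i j => sqCoef i * sqCoef j)]
    simp [Finset.sum_range_succ, sqCoef_succ]
    norm_num
  | (m + 2) =>
    rw [Nat.sum_antidiagonal_eq_sum_range_succ (fun i j => sqCoef i * sqCoef j)]
    rw [Finset.sum_range_succ', Finset.sum_range_succ]
    have h1 : ∀ k ∈ Finset.range (m + 1),
        sqCoef (k + 1) * sqCoef (m + 2 - (k + 1)) =
          (catalan k : ℝ) * (catalan (m - k) : ℝ) / (4 * 4 ^ m) := by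
      intro k hk
      rw [Finset.mem_range] at hk
      have hk' : m + 2 - (k + 1) = (m - k) + 1 := by omega
      rw [hk', sqCoef_succ, sqCoef_succ]
      have h4 : (4 : ℝ) ^ k * 4 ^ (m - k) = 4 ^ m := by
        rw [← pow_add]
        congr 1
        omega
      rw [neg_mul_neg, div_mul_div_comm]
      congr 1
      rw [mul_mul_mul_comm, h4]
      norm_num
    rw [Finset.sum_congr rfl h1, ← Finset.sum_div]
    have hcat : ∑ i ∈ Finset.range (m + 1), (catalan i : ℝ) * (catalan (m - i) : ℝ)
        = (catalan (m + 1) : ℝ) := by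
      have h := catalan_succ m
      rw [Fin.sum_univ_eq_sum_range (fun i => catalan i * catalan (m - i)) (m + 1)] at h
      exact_mod_cast h.symm
    rw [hcat]
    have hm2 : m + 2 - (m + 1 + 1) = 0 := by omega
    rw [hm2]
    simp only [Nat.sub_zero]
    simp only [show m + 1 + 1 = m + 2 from rfl]
    have e2 : sqCoef (m + 2) = -((catalan (m + 1) : ℝ) / (2 * 4 ^ (m + 1))) := rfl
    rw [e2]
    simp only [sqCoef_zero, mul_one, one_mul]
    have h4m : (4 : ℝ) ^ m ≠ 0 := by positivity
    simp only [show (m + 2 = 0) = False by simp, if_false,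
      show (m + 2 = 1) = False by simp]
    rw [pow_succ]
    field_simp
    ring
lemma sqCoef_abs_sum (N : ℕ) :
    ∑ n ∈ Finset.range N, |sqCoef (n + 1)| = 1 - (Nat.centralBinom N : ℝ) / 4 ^ N := by
  induction N with
  | zero => simp [Nat.centralBinom_zero]
  | succ N ih =>
    rw [Finset.sum_range_succ, ih, sqCoef_abs_succ]
    have h1 : ((N : ℝ) + 1) * (Nat.centralBinom (N + 1) : ℝ)
        = 2 * (2 * N + 1) * Nat.centralBinom N := by
      exact_mod_cast Nat.succ_mul_centralBinom_succ N
    have h2 : ((N : ℝ) + 1) * (catalan N : ℝ) = Nat.centralBinom N := by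
      exact_mod_cast succ_mul_catalan_eq_centralBinom N
    have h4 : (4 : ℝ) ^ N ≠ 0 := by positivity
    have hN1 : ((N : ℝ) + 1) ≠ 0 := by positivity
    have key1 : ((N : ℝ) + 1) * (4 * Nat.centralBinom N - Nat.centralBinom (N + 1)
        - 2 * catalan N) = 0 := by linear_combination -h1 - 2 * h2
    have key0 : 4 * (Nat.centralBinom N : ℝ) - Nat.centralBinom (N + 1) - 2 * catalan N = 0 :=
      (mul_eq_zero.mp key1).resolve_left hN1
    rw [pow_succ]
    field_simp
    linear_combination (-2:ℝ) * key0

lemma sqCoef_tail_summable : Summable (fun n => |sqCoef (n + 1)|) :=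
  summable_of_sum_range_le (c := 1) (fun n => abs_nonneg _)
    (fun N => by
      rw [sqCoef_abs_sum]
      have : (0:ℝ) ≤ (Nat.centralBinom N : ℝ) / 4 ^ N := by positivity
      linarith)

lemma sqCoef_tail_tsum_le : ∑' n, |sqCoef (n + 1)| ≤ 1 :=
  Real.tsum_le_of_sum_range_le (fun n => abs_nonneg _)
    (fun N => by
      rw [sqCoef_abs_sum]
      have : (0:ℝ) ≤ (Nat.centralBinom N : ℝ) / 4 ^ N := by positivity
      linarith)

lemma sqCoef_abs_summable : Summable (fun n => |sqCoef n|) :=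
  (summable_nat_add_iff 1).mp sqCoef_tail_summable
open scoped RealInnerProductSpace

set_option maxHeartbeats 1000000 in
set_option synthInstance.maxHeartbeats 1000000 in
theorem exists_compatible_structure
    {H : Type*} [NormedAddCommGroup H] [InnerProductSpace ℝ H] [CompleteSpace H]
    (ω : H → H → ℝ) (hskew : ∀ x y : H, ω x y = -ω y x)
    (A : H →L[ℝ] H) (hA : ∀ x y : H, ⟪A x, y⟫ = ω x y)
    (hAbij : Function.Bijective ⇑A) :
    ∃ (T : H →L[ℝ] H) (J : H →L[ℝ] H),
      (∀ x y : H, ⟪T x, y⟫ = ⟪x, T y⟫) ∧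
      (∀ x : H, 0 ≤ ⟪T x, x⟫) ∧
      Function.Bijective ⇑T ∧
      (∀ x : H, J (J x) = -x) ∧
      (∀ x y : H, ω x y = ⟪T (J x), y⟫) ∧
      (∀ x y : H, ⟪T (J x), J y⟫ = ⟪T x, y⟫) := by
  rcases subsingleton_or_nontrivial H with hH | hH
  · refine ⟨1, 1, fun x y => by simp,
      fun x => by rw [Subsingleton.elim ((1 : H →L[ℝ] H) x) (0 : H), inner_zero_left],
      ⟨fun x y _ => Subsingleton.elim x y, fun y => ⟨y, Subsingleton.elim _ _⟩⟩,
      fun x => Subsingleton.elim _ _,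
      fun x y => by rw [← hA]; congr 1 <;> exact Subsingleton.elim _ _,
      fun x y => by congr 1 <;> exact Subsingleton.elim _ _⟩
  -- A is skew-adjoint
  have hAadj : ∀ x y : H, ⟪A x, y⟫ = -⟪x, A y⟫ := by
    intro x y
    rw [hA, hskew x y, ← hA, real_inner_comm]
  set M : ℝ := ‖A‖ ^ 2 + 1 with hMdef
  have hM0 : (0 : ℝ) < M := by positivity
  set S : H →L[ℝ] H := -(A * A) with hSdef
  have hSapp : ∀ x, S x = -(A (A x)) := fun x => rfl
  have hAAS : ∀ x, A (A x) = -(S x) := fun x => by rw [hSapp, neg_neg]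
  have hSinner : ∀ x y : H, ⟪S x, y⟫ = ⟪A x, A y⟫ := by
    intro x y
    rw [hSapp, inner_neg_left, hAadj (A x) y, neg_neg, real_inner_comm, real_inner_comm (A x)]
  have hSsym : ∀ x y : H, ⟪S x, y⟫ = ⟪x, S y⟫ := by
    intro x y
    rw [hSinner, real_inner_comm, ← hSinner, real_inner_comm]
  have hSxx : ∀ x : H, ⟪S x, x⟫ = ‖A x‖ ^ 2 := by
    intro x
    rw [hSinner, real_inner_self_eq_norm_sq]
  set X : H →L[ℝ] H := 1 - M⁻¹ • S with hXdef
  have hXapp : ∀ x, X x = x - M⁻¹ • S x := fun x => rfl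
  -- ‖X‖ ≤ 1
  have hXnorm : ‖X‖ ≤ 1 := by
    refine ContinuousLinearMap.opNorm_le_bound X zero_le_one (fun x => ?_)
    rw [one_mul]
    have hx2 : ‖X x‖ ^ 2 ≤ ‖x‖ ^ 2 := by
      rw [hXapp, norm_sub_sq_real]
      have h1 : ⟪x, M⁻¹ • S x⟫ = M⁻¹ * ‖A x‖ ^ 2 := by
        rw [real_inner_smul_right, real_inner_comm, hSxx]
      have h2 : ‖M⁻¹ • S x‖ ^ 2 = M⁻¹ ^ 2 * ‖S x‖ ^ 2 := by
        rw [norm_smul, mul_pow, Real.norm_eq_abs, sq_abs]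
      have h3 : ‖S x‖ ≤ ‖A‖ * ‖A x‖ := by
        rw [hSapp, norm_neg]
        exact A.le_opNorm (A x)
      have h4 : ‖S x‖ ^ 2 ≤ M * ‖A x‖ ^ 2 := by
        have h5 : ‖S x‖ ^ 2 ≤ (‖A‖ * ‖A x‖) ^ 2 :=
          pow_le_pow_left₀ (norm_nonneg _) h3 2
        have h6 : (‖A‖ * ‖A x‖) ^ 2 ≤ M * ‖A x‖ ^ 2 := by
          rw [mul_pow, hMdef]
          nlinarith [sq_nonneg (‖A x‖), sq_nonneg ‖A‖]
        linarith
      have h7 : M⁻¹ ^ 2 * ‖S x‖ ^ 2 ≤ M⁻¹ * ‖A x‖ ^ 2 := by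
        have h8 : M⁻¹ ^ 2 * ‖S x‖ ^ 2 ≤ M⁻¹ ^ 2 * (M * ‖A x‖ ^ 2) := by
          apply mul_le_mul_of_nonneg_left h4 (by positivity)
        have h9 : M⁻¹ ^ 2 * (M * ‖A x‖ ^ 2) = M⁻¹ * ‖A x‖ ^ 2 * (M⁻¹ * M) := by ring
        rw [h9, inv_mul_cancel₀ hM0.ne', mul_one] at h8
        exact h8
      have h10 : (0:ℝ) ≤ M⁻¹ * ‖A x‖ ^ 2 := by positivity
      rw [h1, h2]
      linarith
    nlinarith [norm_nonneg (X x), norm_nonneg x]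
  have hpow_le : ∀ n : ℕ, ‖X ^ n‖ ≤ 1 := fun n =>
    le_trans (norm_pow_le X n) (pow_le_one₀ (norm_nonneg X) hXnorm)
  -- the series
  have hnormsum : Summable (fun n => ‖sqCoef n • X ^ n‖) := by
    refine Summable.of_nonneg_of_le (fun n => norm_nonneg _) (fun n => ?_) sqCoef_abs_summable
    show ‖sqCoef n • X ^ n‖ ≤ |sqCoef n|
    rw [norm_smul (sqCoef n) (X ^ n), Real.norm_eq_abs]
    calc |sqCoef n| * ‖X ^ n‖ ≤ |sqCoef n| * 1 :=
          mul_le_mul_of_nonneg_left (hpow_le n) (abs_nonneg _)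
      _ = |sqCoef n| := mul_one _
  have hsummable : Summable (fun n => sqCoef n • X ^ n) := hnormsum.of_norm
  set T0 : H →L[ℝ] H := ∑' n, sqCoef n • X ^ n with hT0def
  -- T0 * T0 = 1 - X
  have hT0sq : T0 * T0 = 1 - X := by
    rw [hT0def, tsum_mul_tsum_eq_tsum_sum_antidiagonal_of_summable_norm hnormsum hnormsum]
    have hterm : ∀ n : ℕ, ∑ kl ∈ antidiagonal n,
        (sqCoef kl.1 • X ^ kl.1) * (sqCoef kl.2 • X ^ kl.2)
        = (if n = 0 then (1:ℝ) else if n = 1 then -1 else 0) • X ^ n := by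
      intro n
      rw [← sqCoef_conv n, Finset.sum_smul]
      refine Finset.sum_congr rfl (fun kl hkl => ?_)
      rw [Finset.HasAntidiagonal.mem_antidiagonal] at hkl
      rw [smul_mul_smul_comm, ← pow_add, hkl]
    rw [tsum_congr hterm]
    rw [tsum_eq_sum (s := {0, 1}) (f := fun n =>
        (if n = 0 then (1:ℝ) else if n = 1 then -1 else 0) • X ^ n)
      (fun n hn => by
        have h0 : n ≠ 0 := fun h => hn (by simp [h])
        have h1 : n ≠ 1 := fun h => hn (by simp [h])
        simp [h0, h1])]
    rw [Finset.sum_insert (by simp), Finset.sum_singleton]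
    norm_num [sub_eq_add_neg]
  have h1X : (1 : H →L[ℝ] H) - X = M⁻¹ • S := by
    rw [hXdef, sub_sub_cancel]
  set T : H →L[ℝ] H := Real.sqrt M • T0 with hTdef
  have hTsq : T * T = S := by
    rw [hTdef, smul_mul_smul_comm, Real.mul_self_sqrt hM0.le, hT0sq, h1X,
      smul_smul, mul_inv_cancel₀ hM0.ne', one_smul]
  have hTT : ∀ x, T (T x) = S x := fun x => by
    rw [← ContinuousLinearMap.mul_apply, hTsq]
  -- symmetry
  have hXsym : ∀ x y : H, ⟪X x, y⟫ = ⟪x, X y⟫ := by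
    intro x y
    rw [hXapp, hXapp, inner_sub_left, inner_sub_right,
      real_inner_smul_left, real_inner_smul_right, hSsym]
  have hXpowsym : ∀ (n : ℕ) (x y : H), ⟪(X ^ n) x, y⟫ = ⟪x, (X ^ n) y⟫ := by
    intro n
    induction n with
    | zero => intro x y; simp
    | succ n ih =>
      intro x y
      conv_lhs => rw [pow_succ, ContinuousLinearMap.mul_apply]
      rw [ih, hXsym, ← ContinuousLinearMap.mul_apply, ← pow_succ']
  have happly : ∀ x : H, T0 x = ∑' n, sqCoef n • (X ^ n) x := by
    intro x
    rw [hT0def]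
    exact (ContinuousLinearMap.apply ℝ H x).map_tsum hsummable
  have happsum : ∀ x : H, Summable (fun n => sqCoef n • (X ^ n) x) := fun x =>
    hsummable.map (ContinuousLinearMap.apply ℝ H x) (ContinuousLinearMap.apply ℝ H x).continuous
  have hinner : ∀ x y : H, ⟪T0 x, y⟫ = ∑' n, sqCoef n * ⟪(X ^ n) x, y⟫ := by
    intro x y
    rw [real_inner_comm, happly x]
    refine ((innerSL ℝ y).map_tsum (happsum x)).trans (tsum_congr fun n => ?_)
    rw [map_smul, smul_eq_mul, innerSL_apply_apply, real_inner_comm]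
  have hT0sym : ∀ x y : H, ⟪T0 x, y⟫ = ⟪x, T0 y⟫ := by
    intro x y
    rw [hinner x y, show (inner ℝ x (T0 y) : ℝ) = inner ℝ (T0 y) x from real_inner_comm _ _,
      hinner y x]
    exact tsum_congr (fun n => by rw [hXpowsym n x y, real_inner_comm])
  have hTsym : ∀ x y : H, ⟪T x, y⟫ = ⟪x, T y⟫ := by
    intro x y
    rw [hTdef]
    simp only [ContinuousLinearMap.smul_apply, real_inner_smul_left, real_inner_smul_right]
    rw [hT0sym]
  -- positivity
  have hT0pos : ∀ x : H, 0 ≤ ⟪T0 x, x⟫ := by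
    intro x
    rw [hinner x x]
    have habs : ∀ n : ℕ, |sqCoef n * ⟪(X ^ n) x, x⟫| ≤ |sqCoef n| * ‖x‖ ^ 2 := by
      intro n
      rw [abs_mul]
      refine mul_le_mul_of_nonneg_left ?_ (abs_nonneg _)
      calc |⟪(X ^ n) x, x⟫| ≤ ‖(X ^ n) x‖ * ‖x‖ := abs_real_inner_le_norm _ _
        _ ≤ (‖X ^ n‖ * ‖x‖) * ‖x‖ :=
            mul_le_mul_of_nonneg_right ((X ^ n).le_opNorm x) (norm_nonneg x)
        _ ≤ (1 * ‖x‖) * ‖x‖ := by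
            have := hpow_le n
            nlinarith [this, mul_nonneg (norm_nonneg x) (norm_nonneg x)]
        _ = ‖x‖ ^ 2 := by ring
    have hboundsum : Summable (fun n => |sqCoef (n + 1)| * ‖x‖ ^ 2) :=
      sqCoef_tail_summable.mul_right _
    have hfsum : Summable (fun n => sqCoef n * ⟪(X ^ n) x, x⟫) := by
      rw [← summable_abs_iff]
      exact Summable.of_nonneg_of_le (fun n => abs_nonneg _) habs
        (sqCoef_abs_summable.mul_right _)
    rw [hfsum.tsum_eq_zero_add]
    have h0 : sqCoef 0 * ⟪(X ^ 0) x, x⟫ = ‖x‖ ^ 2 := by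
      simp [real_inner_self_eq_norm_sq]
    rw [h0]
    have htail : |∑' n, sqCoef (n + 1) * ⟪(X ^ (n + 1)) x, x⟫| ≤ ‖x‖ ^ 2 := by
      have hsum2 : Summable (fun n => ‖sqCoef (n + 1) * ⟪(X ^ (n + 1)) x, x⟫‖) := by
        refine Summable.of_nonneg_of_le (fun n => norm_nonneg _) (fun n => ?_) hboundsum
        show ‖sqCoef (n + 1) * ⟪(X ^ (n + 1)) x, x⟫‖ ≤ |sqCoef (n + 1)| * ‖x‖ ^ 2
        rw [Real.norm_eq_abs]
        exact habs (n + 1)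
      have h1 : |∑' n, sqCoef (n + 1) * ⟪(X ^ (n + 1)) x, x⟫|
          ≤ ∑' n, |sqCoef (n + 1) * ⟪(X ^ (n + 1)) x, x⟫| := by
        have := norm_tsum_le_tsum_norm hsum2
        simp only [Real.norm_eq_abs] at this
        exact this
      have h2 : ∑' n, |sqCoef (n + 1) * ⟪(X ^ (n + 1)) x, x⟫|
          ≤ ∑' n, |sqCoef (n + 1)| * ‖x‖ ^ 2 := by
        refine Summable.tsum_le_tsum (fun n => habs (n + 1)) ?_ hboundsum
        refine Summable.of_nonneg_of_le (fun n => abs_nonneg _) (fun n => habs (n + 1)) hboundsum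
      have h3 : ∑' n, |sqCoef (n + 1)| * ‖x‖ ^ 2 ≤ ‖x‖ ^ 2 := by
        rw [tsum_mul_right]
        nlinarith [sqCoef_tail_tsum_le, sq_nonneg ‖x‖]
      linarith
    have := abs_le.mp htail
    linarith [this.1]
  have hTpos : ∀ x : H, 0 ≤ ⟪T x, x⟫ := by
    intro x
    rw [hTdef]
    simp only [ContinuousLinearMap.smul_apply, real_inner_smul_left]
    exact mul_nonneg (Real.sqrt_nonneg M) (hT0pos x)
  -- commutation
  have hcomm : Commute A X := by
    have hAS : Commute A S := (((Commute.refl A).mul_right (Commute.refl A))).neg_right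
    exact (Commute.one_right A).sub_right (hAS.smul_right M⁻¹)
  have hAT0 : A * T0 = T0 * A := by
    rw [hT0def]
    have hL := (ContinuousLinearMap.mul ℝ (H →L[ℝ] H) A).map_tsum hsummable
    have hR := ((ContinuousLinearMap.mul ℝ (H →L[ℝ] H)).flip A).map_tsum hsummable
    simp only [ContinuousLinearMap.mul_apply', ContinuousLinearMap.flip_apply] at hL hR
    rw [hL, hR]
    exact tsum_congr (fun n => by
      rw [mul_smul_comm, smul_mul_assoc, (hcomm.pow_right n).eq])
  have hAT : ∀ x, A (T x) = T (A x) := by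
    intro x
    have : A * T = T * A := by
      rw [hTdef, mul_smul_comm, smul_mul_assoc, hAT0]
    calc A (T x) = (A * T) x := rfl
      _ = (T * A) x := by rw [this]
      _ = T (A x) := rfl
  -- bijectivity
  have hSbij : Function.Bijective ⇑S := by
    have hc : ⇑S = (fun y : H => -y) ∘ ⇑A ∘ ⇑A := by
      funext x
      exact hSapp x
    rw [hc]
    exact (neg_involutive.bijective).comp (hAbij.comp hAbij)
  have hTinj : Function.Injective ⇑T := by
    intro x y hxy
    exact hSbij.1 (by rw [← hTT, ← hTT, hxy])
  have hTsurj : Function.Surjective ⇑T := by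
    intro y
    obtain ⟨z, hz⟩ := hSbij.2 y
    exact ⟨T z, by rw [hTT, hz]⟩
  have hTbij : Function.Bijective ⇑T := ⟨hTinj, hTsurj⟩
  -- the inverse
  set e : H ≃L[ℝ] H := ContinuousLinearEquiv.ofBijective T
    (LinearMap.ker_eq_bot.mpr hTinj) (LinearMap.range_eq_top.mpr hTsurj) with hedef
  have he : ∀ x, e x = T x := fun _ => rfl
  have heT : ∀ x, e.symm (T x) = x := fun x => by
    rw [show T x = e x from rfl]; exact e.symm_apply_apply x
  have hTe : ∀ y, T (e.symm y) = y := fun y => by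
    rw [← he]; exact e.apply_symm_apply y
  have hAe : ∀ y, A (e.symm y) = e.symm (A y) := by
    intro y
    apply hTinj
    rw [hTe, ← hAT, hTe]
  set J : H →L[ℝ] H := (e.symm : H →L[ℝ] H).comp A with hJdef
  have hJapp : ∀ x, J x = e.symm (A x) := fun _ => rfl
  have hTJ : ∀ x, T (J x) = A x := fun x => by rw [hJapp, hTe]
  refine ⟨T, J, hTsym, hTpos, hTbij, ?_, ?_, ?_⟩
  · intro x
    rw [hJapp, hJapp, hAe, hAAS, map_neg, map_neg, ← hTT x, heT, heT]
  · intro x y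
    rw [hTJ, hA]
  · intro x y
    rw [hTJ, hJapp, hAadj, hAe, hAAS, map_neg, inner_neg_right, ← hTT y, heT, neg_neg,
      ← hTsym]
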